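/- Let r > 0 and A > 0 be real numbers, and let e be a real-valued C² function defined on the open ball B(0,r) ⊂ ℝ² such that e > 0 on B(0,r), −Δe(x) ≤ A·e(x)² for all x ∈ B(0,r), e is integrable on B(0,r), and ∫_{B(0,r)} e dx ≤ π/(12A). Then e(0) ≤ (8/(π r²)) · ∫_{B(0,r)} e dx. -/

import Mathlib

open MeasureTheory Real


noncomputable abbrev EE := EuclideanSpace ℝ (Fin 2)
noncomputable def E1 : EE := EuclideanSpace.single 0 1
noncomputable def E2 : EE := EuclideanSpace.single 1 1

lemma norm_comb (a b : ℝ) : ‖a • E1 + b • E2‖ = Real.sqrt (a^2 + b^2) := by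
  rw [EuclideanSpace.norm_eq]
  congr 1
  simp [Fin.sum_univ_two, E1, E2, EuclideanSpace.single_apply, sq_abs]

noncomputable def uu (θ : ℝ) : EE := Real.cos θ • E1 + Real.sin θ • E2
noncomputable def vv (θ : ℝ) : EE := (-Real.sin θ) • E1 + Real.cos θ • E2

lemma norm_uu (θ : ℝ) : ‖uu θ‖ = 1 := by
  rw [uu, norm_comb]
  rw [cos_sq_add_sin_sq]; exact Real.sqrt_one

lemma hasDerivAt_uu (θ : ℝ) : HasDerivAt uu (vv θ) θ := by
  unfold uu vv
  exact ((Real.hasDerivAt_cos θ).smul_const E1).add ((Real.hasDerivAt_sin θ).smul_const E2)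

lemma hasDerivAt_vv (θ : ℝ) : HasDerivAt vv (-(uu θ)) θ := by
  have h : -(uu θ) = (-Real.cos θ) • E1 + (-Real.sin θ) • E2 := by
    unfold uu; module
  rw [h]
  exact (((Real.hasDerivAt_sin θ).neg).smul_const E1).add ((Real.hasDerivAt_cos θ).smul_const E2)

lemma uu_periodic : uu π = uu (-π) := by unfold uu; rw [Real.cos_neg, Real.sin_neg, Real.sin_pi]; simp
lemma vv_periodic : vv π = vv (-π) := by unfold vv; rw [Real.cos_neg, Real.sin_neg, Real.sin_pi]; simp

noncomputable def TT (p : ℝ × ℝ) : EE := p.1 • E1 + p.2 • E2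

lemma TT_eq : TT = fun p : ℝ × ℝ =>
    (MeasurableEquiv.toLp 2 (Fin 2 → ℝ)) ((MeasurableEquiv.finTwoArrow (α := ℝ)).symm p) := by
  funext p
  apply PiLp.ext
  intro i
  fin_cases i <;>
    simp [TT, E1, E2, EuclideanSpace.single_apply, MeasurableEquiv.toLp_apply,
      MeasurableEquiv.finTwoArrow]

lemma TT_measurePreserving : MeasurePreserving TT := by
  rw [TT_eq]
  exact ((EuclideanSpace.volume_preserving_symm_measurableEquiv_toLp (Fin 2)).symm _).comp
    ((volume_preserving_finTwoArrow ℝ).symm _)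

lemma TT_measurableEmbedding : MeasurableEmbedding TT := by
  rw [TT_eq]
  exact ((MeasurableEquiv.finTwoArrow (α := ℝ)).symm.trans
    (MeasurableEquiv.toLp 2 (Fin 2 → ℝ))).measurableEmbedding

lemma continuous_uu : Continuous uu := by
  unfold uu
  exact (Real.continuous_cos.smul continuous_const).add (Real.continuous_sin.smul continuous_const)

lemma continuous_vv : Continuous vv := by
  unfold vv
  exact ((Real.continuous_sin.neg).smul continuous_const).add
    (Real.continuous_cos.smul continuous_const)

open Set in
lemma polar_area (w : EE → ℝ) (x₀ : EE) (ρ : ℝ) (hρ : 0 < ρ) {U : Set EE}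
    (hsub : Metric.closedBall x₀ ρ ⊆ U) (hw : ContinuousOn w U) :
    ∫ x in Metric.ball x₀ ρ, w x
      = ∫ s in (0:ℝ)..ρ, ∫ θ in (-π)..π, s * w (x₀ + s • uu θ) := by
  -- step A: translation
  have hA : ∫ x in Metric.ball x₀ ρ, w x = ∫ x in Metric.ball (0:EE) ρ, w (x₀ + x) := by
    have hemb : MeasurableEmbedding (fun x : EE => x₀ + x) :=
      (Homeomorph.addLeft x₀).measurableEmbedding
    have hmp : MeasurePreserving (fun x : EE => x₀ + x) :=
      measurePreserving_add_left volume x₀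
    have hpre : (fun x : EE => x₀ + x) ⁻¹' Metric.ball x₀ ρ = Metric.ball (0:EE) ρ := by
      ext x
      simp [Metric.mem_ball, dist_eq_norm]
    rw [← hpre, hmp.setIntegral_preimage_emb hemb]
  -- step B: to ℝ × ℝ
  have hB : ∫ x in Metric.ball (0:EE) ρ, w (x₀ + x)
      = ∫ p in TT ⁻¹' (Metric.ball (0:EE) ρ), w (x₀ + TT p) :=
    (TT_measurePreserving.setIntegral_preimage_emb TT_measurableEmbedding _ _).symm
  -- step C: identify the preimage
  have hC : TT ⁻¹' (Metric.ball (0:EE) ρ) = {p : ℝ × ℝ | p.1^2 + p.2^2 < ρ^2} := by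
    ext p
    simp only [Set.mem_preimage, Metric.mem_ball, dist_zero_right, Set.mem_setOf_eq]
    rw [show ‖TT p‖ = Real.sqrt (p.1^2 + p.2^2) from norm_comb p.1 p.2]
    exact Real.sqrt_lt' hρ
  rw [hA, hB, hC]
  -- polar coordinates
  set D : Set (ℝ × ℝ) := {p : ℝ × ℝ | p.1^2 + p.2^2 < ρ^2} with hD
  have hD_meas : MeasurableSet D :=
    measurableSet_lt (((continuous_fst.pow 2).add (continuous_snd.pow 2)).measurable)
      measurable_const
  set g : ℝ × ℝ → ℝ := fun p => w (x₀ + TT p) with hg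
  set F : ℝ × ℝ → ℝ := fun p => p.1 * w (x₀ + p.1 • uu p.2) with hF
  set S : Set (ℝ × ℝ) := Ioo (0:ℝ) ρ ×ˢ Ioo (-π) π with hS
  have hS_meas : MeasurableSet S := measurableSet_Ioo.prod measurableSet_Ioo
  have hTTpolar : ∀ s θ : ℝ, TT (s * Real.cos θ, s * Real.sin θ) = s • uu θ := by
    intro s θ; simp only [TT, uu]; module
  have key := integral_comp_polarCoord_symm (D.indicator g)
  rw [integral_indicator hD_meas] at key
  have hcongr : ∀ p ∈ polarCoord.target,
      p.1 • (D.indicator g) (polarCoord.symm p) = S.indicator F p := by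
    rintro ⟨s, θ⟩ ⟨hs, hθ⟩
    simp only [Set.mem_Ioi] at hs
    have hsymm : polarCoord.symm (s, θ) = (s * Real.cos θ, s * Real.sin θ) := rfl
    have hmem : polarCoord.symm (s, θ) ∈ D ↔ s < ρ := by
      rw [hsymm]
      simp only [hD, Set.mem_setOf_eq]
      have hss : (s * Real.cos θ)^2 + (s * Real.sin θ)^2 = s^2 := by
        nlinarith [Real.sin_sq_add_cos_sq θ]
      rw [hss]
      exact pow_lt_pow_iff_left₀ hs.le hρ.le (by norm_num)
    by_cases hcase : s < ρ
    · rw [Set.indicator_of_mem (hmem.2 hcase), Set.indicator_of_mem (by exact ⟨⟨hs, hcase⟩, hθ⟩)]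
      rw [hsymm, hg, hF]
      simp only [smul_eq_mul]
      rw [hTTpolar]
    · rw [Set.indicator_of_notMem (fun h => hcase (hmem.1 h)),
        Set.indicator_of_notMem (by rintro ⟨⟨_, h2⟩, _⟩; exact hcase h2)]
      simp
  rw [setIntegral_congr_fun (polarCoord.open_target.measurableSet) hcongr] at key
  rw [setIntegral_indicator hS_meas] at key
  have htarget_inter : polarCoord.target ∩ S = S := by
    apply Set.inter_eq_self_of_subset_right
    rintro ⟨s, θ⟩ ⟨h1, h2⟩
    exact ⟨Set.mem_Ioi.2 h1.1, h2⟩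
  rw [htarget_inter] at key
  rw [← key]
  -- Fubini
  have hK : IsCompact (Icc (0:ℝ) ρ ×ˢ Icc (-π) π) := isCompact_Icc.prod isCompact_Icc
  have hφcont : Continuous (fun p : ℝ × ℝ => x₀ + p.1 • uu p.2) := by
    apply continuous_const.add
    exact continuous_fst.smul ((continuous_uu).comp continuous_snd)
  have hFK : ContinuousOn F (Icc (0:ℝ) ρ ×ˢ Icc (-π) π) := by
    apply ContinuousOn.mul continuous_fst.continuousOn
    apply hw.comp hφcont.continuousOn
    rintro ⟨s, θ⟩ ⟨hs, _⟩
    apply hsub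
    simp only [Metric.mem_closedBall, dist_eq_norm, add_sub_cancel_left]
    rw [norm_smul, norm_uu, mul_one]
    rw [Real.norm_eq_abs, abs_of_nonneg hs.1]
    exact hs.2
  have hF_int : IntegrableOn F S := by
    apply (hFK.integrableOn_compact hK).mono_set
    exact Set.prod_mono Set.Ioo_subset_Icc_self Set.Ioo_subset_Icc_self
  rw [MeasureTheory.Measure.volume_eq_prod] at hF_int ⊢
  rw [MeasureTheory.setIntegral_prod F hF_int]
  rw [intervalIntegral.integral_of_le hρ.le, integral_Ioc_eq_integral_Ioo]
  apply setIntegral_congr_fun measurableSet_Ioo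
  intro s _
  dsimp only
  rw [intervalIntegral.integral_of_le (by linarith [Real.pi_pos] : (-π:ℝ) ≤ π),
    integral_Ioc_eq_integral_Ioo]

open intervalIntegral in
lemma hasDerivAt_param (Φ Φ' : ℝ → ℝ → ℝ) (s₀ ε C : ℝ) (hε : 0 < ε)
    (hmeas : ∀ s ∈ Metric.ball s₀ ε, ContinuousOn (Φ s) (Set.uIcc (-π) π))
    (hmeas' : ContinuousOn (Φ' s₀) (Set.uIcc (-π) π))
    (hbound : ∀ θ ∈ Set.uIoc (-π) π, ∀ s ∈ Metric.ball s₀ ε, |Φ' s θ| ≤ C)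
    (hdiffp : ∀ θ ∈ Set.uIoc (-π) π, ∀ s ∈ Metric.ball s₀ ε,
      HasDerivAt (fun t => Φ t θ) (Φ' s θ) s) :
    HasDerivAt (fun s => ∫ θ in (-π)..π, Φ s θ) (∫ θ in (-π)..π, Φ' s₀ θ) s₀ := by
  have := intervalIntegral.hasDerivAt_integral_of_dominated_loc_of_deriv_le
    (F := Φ) (F' := Φ') (x₀ := s₀) (a := -π) (b := π) (μ := volume)
    (bound := fun _ => C) (Metric.ball_mem_nhds s₀ hε)
    (Filter.eventually_of_mem (Metric.ball_mem_nhds s₀ hε) (fun s hs =>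
      ((hmeas s hs).mono Set.uIoc_subset_uIcc).aestronglyMeasurable measurableSet_uIoc))
    ((hmeas s₀ (Metric.mem_ball_self hε)).intervalIntegrable)
    ((hmeas'.mono Set.uIoc_subset_uIcc).aestronglyMeasurable measurableSet_uIoc)
    (MeasureTheory.ae_of_all _ (fun θ hθ s hs => by
      rw [Real.norm_eq_abs]; exact hbound θ hθ s hs))
    intervalIntegrable_const
    (MeasureTheory.ae_of_all _ hdiffp)
  exact this.2
set_option maxHeartbeats 1600000 in
open Set intervalIntegral in
lemma mvi (w : EE → ℝ) {U : Set EE} (hU : IsOpen U) (hw : ContDiffOn ℝ 2 w U)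
    (x₀ : EE) (ρ ρ' b : ℝ) (hρ : 0 < ρ) (hρρ' : ρ < ρ')
    (hsub : Metric.closedBall x₀ ρ' ⊆ U)
    (hΔ : ∀ x ∈ Metric.ball x₀ ρ,
      -b ≤ fderiv ℝ (fderiv ℝ w) x E1 E1 + fderiv ℝ (fderiv ℝ w) x E2 E2) :
    w x₀ ≤ b * ρ^2 / 8 + (π * ρ^2)⁻¹ * ∫ x in Metric.ball x₀ ρ, w x := by
  have hπ := Real.pi_pos
  set F := fderiv ℝ w with hFdef
  set B := fderiv ℝ F with hBdef
  -- membership facts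
  have hmem : ∀ (s θ : ℝ), |s| ≤ ρ' → x₀ + s • uu θ ∈ Metric.closedBall x₀ ρ' := by
    intro s θ hs
    simp only [Metric.mem_closedBall, dist_eq_norm, add_sub_cancel_left]
    rw [norm_smul, norm_uu, mul_one, Real.norm_eq_abs]; exact hs
  have hmemU : ∀ (s θ : ℝ), |s| ≤ ρ' → x₀ + s • uu θ ∈ U := fun s θ hs => hsub (hmem s θ hs)
  -- differentiability facts
  have hdw : ∀ x ∈ U, HasFDerivAt w (F x) x := by
    intro x hx
    exact ((hw.differentiableOn (by norm_num)).differentiableAt (hU.mem_nhds hx)).hasFDerivAt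
  have hF1 : ContDiffOn ℝ 1 F U := ContDiffOn.fderiv_of_isOpen (m := 1) hw hU (by norm_num)
  have hdF : ∀ x ∈ U, HasFDerivAt F (B x) x := by
    intro x hx
    exact ((hF1.differentiableOn (by norm_num)).differentiableAt (hU.mem_nhds hx)).hasFDerivAt
  have hFcont : ContinuousOn F U := hF1.continuousOn
  have hBcont : ContinuousOn B U := (ContDiffOn.fderiv_of_isOpen (m := 0) hF1 hU (by norm_num)).continuousOn
  -- bounds on the compact ball
  obtain ⟨C₁, hC₁⟩ := (isCompact_closedBall x₀ ρ').exists_bound_of_continuousOn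
    (hFcont.mono hsub)
  obtain ⟨C₂, hC₂⟩ := (isCompact_closedBall x₀ ρ').exists_bound_of_continuousOn (f := B)
    (hBcont.mono hsub)
  -- pointwise curve derivatives
  have hcurve_s : ∀ (θ s : ℝ), HasDerivAt (fun t : ℝ => x₀ + t • uu θ) (uu θ) s := by
    intro θ s
    have h1 : HasDerivAt (fun t : ℝ => t • uu θ) ((1:ℝ) • uu θ) s :=
      (hasDerivAt_id s).smul_const (uu θ)
    rw [one_smul] at h1
    exact h1.const_add x₀
  have hcurve_θ : ∀ (s θ : ℝ), HasDerivAt (fun t : ℝ => x₀ + s • uu t) (s • vv θ) θ := by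
    intro s θ
    exact ((hasDerivAt_uu θ).const_smul s).const_add x₀
  have hWs : ∀ (s θ : ℝ), |s| ≤ ρ' →
      HasDerivAt (fun t => w (x₀ + t • uu θ)) (F (x₀ + s • uu θ) (uu θ)) s := by
    intro s θ hs
    exact (hdw _ (hmemU s θ hs)).comp_hasDerivAt s (hcurve_s θ s)
  have hFs : ∀ (s θ : ℝ), |s| ≤ ρ' →
      HasDerivAt (fun t => F (x₀ + t • uu θ) (uu θ)) (B (x₀ + s • uu θ) (uu θ) (uu θ)) s := by
    intro s θ hs
    have h1 : HasDerivAt (fun t => F (x₀ + t • uu θ)) (B (x₀ + s • uu θ) (uu θ)) s :=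
      (hdF _ (hmemU s θ hs)).comp_hasDerivAt s (hcurve_s θ s)
    have h2 := h1.clm_apply (hasDerivAt_const s (uu θ))
    simpa using h2
  have hsFs : ∀ (s θ : ℝ), |s| ≤ ρ' →
      HasDerivAt (fun t => t * F (x₀ + t • uu θ) (uu θ))
        (F (x₀ + s • uu θ) (uu θ) + s * B (x₀ + s • uu θ) (uu θ) (uu θ)) s := by
    intro s θ hs
    have := (hasDerivAt_id s).mul (hFs s θ hs)
    refine this.congr_deriv ?_
    simp only [id_eq]
    ring
  have hWθ : ∀ (s θ : ℝ), |s| ≤ ρ' →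
      HasDerivAt (fun t => w (x₀ + s • uu t)) (F (x₀ + s • uu θ) (s • vv θ)) θ := by
    intro s θ hs
    exact (hdw _ (hmemU s θ hs)).comp_hasDerivAt θ (hcurve_θ s θ)
  have hVθ : ∀ (s θ : ℝ), |s| ≤ ρ' →
      HasDerivAt (fun t => F (x₀ + s • uu t) (s • vv t))
        (B (x₀ + s • uu θ) (s • vv θ) (s • vv θ) + F (x₀ + s • uu θ) (s • -(uu θ))) θ := by
    intro s θ hs
    have h1 : HasDerivAt (fun t => F (x₀ + s • uu t)) (B (x₀ + s • uu θ) (s • vv θ)) θ :=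
      (hdF _ (hmemU s θ hs)).comp_hasDerivAt θ (hcurve_θ s θ)
    exact h1.clm_apply ((hasDerivAt_vv θ).const_smul s)
  -- continuity in θ
  have hcont_curve : ∀ s : ℝ, Continuous (fun θ : ℝ => x₀ + s • uu θ) :=
    fun s => continuous_const.add (continuous_uu.const_smul s)
  have hcontθ_w : ∀ s : ℝ, |s| ≤ ρ' →
      ContinuousOn (fun θ => w (x₀ + s • uu θ)) (uIcc (-π) π) :=
    fun s hs => hw.continuousOn.comp (hcont_curve s).continuousOn (fun θ _ => hmemU s θ hs)
  have hcontθ_F : ∀ s : ℝ, |s| ≤ ρ' →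
      ContinuousOn (fun θ => F (x₀ + s • uu θ)) (uIcc (-π) π) :=
    fun s hs => hFcont.comp (hcont_curve s).continuousOn (fun θ _ => hmemU s θ hs)
  have hcontθ_B : ∀ s : ℝ, |s| ≤ ρ' →
      ContinuousOn (fun θ => B (x₀ + s • uu θ)) (uIcc (-π) π) :=
    fun s hs => hBcont.comp (hcont_curve s).continuousOn (fun θ _ => hmemU s θ hs)
  have hint_star : ∀ s : ℝ, |s| ≤ ρ' → IntervalIntegrable
      (fun θ => B (x₀ + s • uu θ) (s • vv θ) (s • vv θ) + F (x₀ + s • uu θ) (s • -(uu θ)))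
      volume (-π) π := by
    intro s hs
    apply ContinuousOn.intervalIntegrable
    apply ContinuousOn.add
    · exact ((hcontθ_B s hs).clm_apply
        (continuous_vv.const_smul s).continuousOn).clm_apply
        (continuous_vv.const_smul s).continuousOn
    · exact (hcontθ_F s hs).clm_apply
        (continuous_uu.neg.const_smul s).continuousOn
  -- the periodicity identity
  have hstar : ∀ s : ℝ, |s| ≤ ρ' →
      ∫ θ in (-π)..π,
        (B (x₀ + s • uu θ) (s • vv θ) (s • vv θ) + F (x₀ + s • uu θ) (s • -(uu θ))) = 0 := by
    intro s hs
    rw [intervalIntegral.integral_eq_sub_of_hasDerivAt (fun θ _ => hVθ s θ hs) (hint_star s hs)]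
    rw [uu_periodic, vv_periodic, sub_self]
  -- the rotation-invariance of the trace
  have hquad : ∀ (L : EE →L[ℝ] EE →L[ℝ] ℝ) (θ : ℝ),
      L (uu θ) (uu θ) + L (vv θ) (vv θ) = L E1 E1 + L E2 E2 := by
    intro L θ
    simp only [uu, vv, map_add, _root_.map_smul, ContinuousLinearMap.add_apply,
      ContinuousLinearMap.smul_apply, smul_eq_mul, ContinuousLinearMap.coe_smul',
      Pi.smul_apply]
    linear_combination (L E1 E1 + L E2 E2) * Real.sin_sq_add_cos_sq θ
  -- the angular integrals
  set gI : ℝ → ℝ := fun s => ∫ θ in (-π)..π, w (x₀ + s • uu θ) with hgIdef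
  set kI : ℝ → ℝ := fun s => ∫ θ in (-π)..π, F (x₀ + s • uu θ) (uu θ) with hkIdef
  set hI : ℝ → ℝ := fun s => ∫ θ in (-π)..π, s * F (x₀ + s • uu θ) (uu θ) with hhIdef
  set qI : ℝ → ℝ := fun s => ∫ θ in (-π)..π,
      (F (x₀ + s • uu θ) (uu θ) + s * B (x₀ + s • uu θ) (uu θ) (uu θ)) with hqIdef
  have hεpos : (0:ℝ) < ρ' - ρ := by linarith
  have habs : ∀ s₀ : ℝ, |s₀| ≤ ρ → ∀ s ∈ Metric.ball s₀ (ρ' - ρ), |s| ≤ ρ' := by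
    intro s₀ hs₀ s hs
    rw [Metric.mem_ball, Real.dist_eq] at hs
    calc |s| = |s₀ + (s - s₀)| := by ring_nf
    _ ≤ |s₀| + |s - s₀| := abs_add_le _ _
    _ ≤ ρ + (ρ' - ρ) := by rw [abs_sub_comm] at hs ⊢; exact add_le_add hs₀ hs.le
    _ = ρ' := by ring
  have hFbound : ∀ s θ : ℝ, |s| ≤ ρ' → |F (x₀ + s • uu θ) (uu θ)| ≤ C₁ := by
    intro s θ hs
    rw [← Real.norm_eq_abs]
    calc ‖F (x₀ + s • uu θ) (uu θ)‖ ≤ ‖F (x₀ + s • uu θ)‖ * ‖uu θ‖ :=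
      (F (x₀ + s • uu θ)).le_opNorm (uu θ)
    _ = ‖F (x₀ + s • uu θ)‖ := by rw [norm_uu, mul_one]
    _ ≤ C₁ := hC₁ _ (hmem s θ hs)
  have hBbound : ∀ s θ : ℝ, |s| ≤ ρ' → |B (x₀ + s • uu θ) (uu θ) (uu θ)| ≤ C₂ := by
    intro s θ hs
    rw [← Real.norm_eq_abs]
    calc ‖B (x₀ + s • uu θ) (uu θ) (uu θ)‖ ≤ ‖B (x₀ + s • uu θ) (uu θ)‖ * ‖uu θ‖ :=
      ContinuousLinearMap.le_opNorm _ _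
    _ ≤ (‖B (x₀ + s • uu θ)‖ * ‖uu θ‖) * ‖uu θ‖ :=
      mul_le_mul_of_nonneg_right (ContinuousLinearMap.le_opNorm _ _) (norm_nonneg _)
    _ = ‖B (x₀ + s • uu θ)‖ := by rw [norm_uu, mul_one, mul_one]
    _ ≤ C₂ := hC₂ _ (hmem s θ hs)
  have hC₁0 : 0 ≤ C₁ := le_trans (abs_nonneg _) (hFbound 0 0 (by simp [abs_of_nonneg]; linarith))
  have hC₂0 : 0 ≤ C₂ := le_trans (abs_nonneg _) (hBbound 0 0 (by simp [abs_of_nonneg]; linarith))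
  have hg' : ∀ s₀ : ℝ, |s₀| ≤ ρ → HasDerivAt gI (kI s₀) s₀ := by
    intro s₀ hs₀
    apply hasDerivAt_param _ _ s₀ (ρ' - ρ) C₁ hεpos
    · intro s hs; exact hcontθ_w s (habs s₀ hs₀ s hs)
    · exact (hcontθ_F s₀ (hs₀.trans hρρ'.le)).clm_apply continuous_uu.continuousOn
    · intro θ _ s hs; exact hFbound s θ (habs s₀ hs₀ s hs)
    · intro θ _ s hs; exact hWs s θ (habs s₀ hs₀ s hs)
  have hh' : ∀ s₀ : ℝ, |s₀| ≤ ρ → HasDerivAt hI (qI s₀) s₀ := by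
    intro s₀ hs₀
    apply hasDerivAt_param _ _ s₀ (ρ' - ρ) (C₁ + ρ' * C₂) hεpos
    · intro s hs
      exact continuous_const.continuousOn.mul
        ((hcontθ_F s (habs s₀ hs₀ s hs)).clm_apply continuous_uu.continuousOn)
    · apply ContinuousOn.add
      · exact (hcontθ_F s₀ (hs₀.trans hρρ'.le)).clm_apply continuous_uu.continuousOn
      · exact continuous_const.continuousOn.mul
          (((hcontθ_B s₀ (hs₀.trans hρρ'.le)).clm_apply continuous_uu.continuousOn).clm_apply
            continuous_uu.continuousOn)
    · intro θ _ s hs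
      have h1 := hFbound s θ (habs s₀ hs₀ s hs)
      have h2 := hBbound s θ (habs s₀ hs₀ s hs)
      have h3 : |s| ≤ ρ' := habs s₀ hs₀ s hs
      calc |F (x₀ + s • uu θ) (uu θ) + s * B (x₀ + s • uu θ) (uu θ) (uu θ)|
          ≤ |F (x₀ + s • uu θ) (uu θ)| + |s * B (x₀ + s • uu θ) (uu θ) (uu θ)| := abs_add_le _ _
      _ ≤ C₁ + ρ' * C₂ := by
          rw [abs_mul]
          exact add_le_add h1 (mul_le_mul h3 h2 (abs_nonneg _) (by linarith))
    · intro θ _ s hs; exact hsFs s θ (habs s₀ hs₀ s hs)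
  have hIk : ∀ s : ℝ, hI s = s * kI s := by
    intro s
    rw [hhIdef, hkIdef]
    exact intervalIntegral.integral_const_mul s _
  -- lower bound for qI on (0, ρ)
  have hq_lb : ∀ s : ℝ, 0 < s → s < ρ → -(2*π*b*s) ≤ qI s := by
    intro s hs0 hsρ
    have hsρ' : |s| ≤ ρ' := by rw [abs_of_pos hs0]; linarith
    have hcmem : ∀ θ : ℝ, x₀ + s • uu θ ∈ Metric.ball x₀ ρ := by
      intro θ
      simp only [Metric.mem_ball, dist_eq_norm, add_sub_cancel_left]
      rw [norm_smul, norm_uu, mul_one, Real.norm_eq_abs, abs_of_pos hs0]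
      exact hsρ
    have hLcont : ContinuousOn
        (fun θ => B (x₀ + s • uu θ) E1 E1 + B (x₀ + s • uu θ) E2 E2) (uIcc (-π) π) :=
      (((hcontθ_B s hsρ').clm_apply continuousOn_const).clm_apply continuousOn_const).add
        (((hcontθ_B s hsρ').clm_apply continuousOn_const).clm_apply continuousOn_const)
    set L : ℝ := ∫ θ in (-π)..π, (B (x₀ + s • uu θ) E1 E1 + B (x₀ + s • uu θ) E2 E2) with hLdef
    have hL_ge : -(2*π*b) ≤ L := by
      have h0 : ∫ θ in (-π)..π, (-b : ℝ) = -(2*π*b) := by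
        rw [intervalIntegral.integral_const, smul_eq_mul]; ring
      rw [← h0]
      apply intervalIntegral.integral_mono_on (by linarith) intervalIntegrable_const
        hLcont.intervalIntegrable
      intro θ _
      exact hΔ _ (hcmem θ)
    have int1 : IntervalIntegrable
        (fun θ => s * (F (x₀ + s • uu θ) (uu θ) + s * B (x₀ + s • uu θ) (uu θ) (uu θ)))
        volume (-π) π := by
      apply ContinuousOn.intervalIntegrable
      apply continuous_const.continuousOn.mul
      exact ((hcontθ_F s hsρ').clm_apply continuous_uu.continuousOn).add
        (continuous_const.continuousOn.mul
          (((hcontθ_B s hsρ').clm_apply continuous_uu.continuousOn).clm_apply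
            continuous_uu.continuousOn))
    have hkey : s * qI s = s^2 * L := by
      rw [hqIdef]
      simp only
      rw [← intervalIntegral.integral_const_mul]
      rw [← add_zero (∫ θ in (-π)..π,
        s * (F (x₀ + s • uu θ) (uu θ) + s * B (x₀ + s • uu θ) (uu θ) (uu θ)))]
      rw [← hstar s hsρ']
      rw [← intervalIntegral.integral_add int1 (hint_star s hsρ')]
      rw [hLdef, ← intervalIntegral.integral_const_mul]
      apply intervalIntegral.integral_congr
      intro θ _
      have e1 : B (x₀ + s • uu θ) (s • vv θ) (s • vv θ)
          = s^2 * (B (x₀ + s • uu θ) (vv θ) (vv θ)) := by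
        simp only [_root_.map_smul, ContinuousLinearMap.smul_apply, smul_eq_mul]
        ring
      have e2 : F (x₀ + s • uu θ) (s • -(uu θ)) = -(s * F (x₀ + s • uu θ) (uu θ)) := by
        simp only [_root_.map_smul, map_neg, smul_eq_mul]
        ring
      simp only
      rw [e1, e2, ← hquad (B (x₀ + s • uu θ)) θ]
      ring
    have hqL : qI s = s * L := by
      have h2 : s * qI s = s * (s * L) := by rw [hkey]; ring
      exact mul_left_cancel₀ (ne_of_gt hs0) h2
    rw [hqL]
    calc -(2*π*b*s) = s * (-(2*π*b)) := by ring
    _ ≤ s * L := mul_le_mul_of_nonneg_left hL_ge hs0.le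
  -- lower bound for hI on [0, ρ]
  have habsρ : ∀ s : ℝ, s ∈ Icc (0:ℝ) ρ → |s| ≤ ρ := by
    intro s hs; rw [abs_of_nonneg hs.1]; exact hs.2
  have hH' : ∀ s : ℝ, |s| ≤ ρ →
      HasDerivAt (fun t => hI t + π*b*t^2) (qI s + π*b*(2*s)) s := by
    intro s hs
    have h1 : HasDerivAt (fun t : ℝ => π*b*t^2) (π*b*(2*s)) s := by
      have := (hasDerivAt_pow 2 s).const_mul (π*b)
      refine this.congr_deriv ?_
      push_cast
      ring
    exact (hh' s hs).add h1
  have hI_lb : ∀ s ∈ Icc (0:ℝ) ρ, -(π*b*s^2) ≤ hI s := by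
    intro s hs
    have hmono : MonotoneOn (fun t => hI t + π*b*t^2) (Icc (0:ℝ) ρ) := by
      apply monotoneOn_of_deriv_nonneg (convex_Icc 0 ρ)
      · intro x hx
        exact ((hH' x (habsρ x hx)).continuousAt).continuousWithinAt
      · intro x hx
        rw [interior_Icc] at hx
        exact ((hH' x (habsρ x ⟨hx.1.le, hx.2.le⟩)).differentiableAt).differentiableWithinAt
      · intro x hx
        rw [interior_Icc] at hx
        rw [(hH' x (habsρ x ⟨hx.1.le, hx.2.le⟩)).deriv]
        have := hq_lb x hx.1 hx.2
        linarith
    have h0mem : (0:ℝ) ∈ Icc (0:ℝ) ρ := ⟨le_refl _, hρ.le⟩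
    have hmono0 : hI 0 + π*b*0^2 ≤ hI s + π*b*s^2 := hmono h0mem hs hs.1
    have hI0 : hI 0 = 0 := by
      rw [hhIdef]
      simp
    rw [hI0] at hmono0
    linarith [hmono0]
  -- lower bound for gI on [0, ρ]
  have hG' : ∀ s : ℝ, |s| ≤ ρ →
      HasDerivAt (fun t => gI t + π*b*t^2/2) (kI s + π*b*s) s := by
    intro s hs
    have h1 : HasDerivAt (fun t : ℝ => π*b*t^2/2) (π*b*s) s := by
      have := ((hasDerivAt_pow 2 s).const_mul (π*b)).div_const 2
      refine this.congr_deriv ?_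
      push_cast
      ring
    exact (hg' s hs).add h1
  have hg_lb : ∀ s ∈ Icc (0:ℝ) ρ, 2*π*(w x₀) - π*b*s^2/2 ≤ gI s := by
    intro s hs
    have hmono : MonotoneOn (fun t => gI t + π*b*t^2/2) (Icc (0:ℝ) ρ) := by
      apply monotoneOn_of_deriv_nonneg (convex_Icc 0 ρ)
      · intro x hx
        exact ((hG' x (habsρ x hx)).continuousAt).continuousWithinAt
      · intro x hx
        rw [interior_Icc] at hx
        exact ((hG' x (habsρ x ⟨hx.1.le, hx.2.le⟩)).differentiableAt).differentiableWithinAt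
      · intro x hx
        rw [interior_Icc] at hx
        rw [(hG' x (habsρ x ⟨hx.1.le, hx.2.le⟩)).deriv]
        have h1 := hI_lb x ⟨hx.1.le, hx.2.le⟩
        have h2 := hIk x
        rw [h2] at h1
        have h3 : x * 0 ≤ x * (kI x + π*b*x) := by nlinarith
        have h4 := (mul_le_mul_iff_right₀ hx.1).mp h3
        linarith
    have h0mem : (0:ℝ) ∈ Icc (0:ℝ) ρ := ⟨le_refl _, hρ.le⟩
    have hmono0 : gI 0 + π*b*0^2/2 ≤ gI s + π*b*s^2/2 := hmono h0mem hs hs.1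
    have hg0 : gI 0 = 2*π*(w x₀) := by
      rw [hgIdef]
      simp only [zero_smul, add_zero]
      rw [intervalIntegral.integral_const, smul_eq_mul]
      ring
    rw [hg0] at hmono0
    linarith [hmono0]
  -- put everything together via polar coordinates
  have hpolar := polar_area w x₀ ρ hρ (fun x hx => hsub (by
    rw [Metric.mem_closedBall] at hx ⊢; linarith)) hw.continuousOn
  have hinner : ∀ s : ℝ, (∫ θ in (-π)..π, s * w (x₀ + s • uu θ)) = s * gI s := by
    intro s
    rw [hgIdef]
    exact intervalIntegral.integral_const_mul s _
  have hgIcont : ContinuousOn gI (Icc (0:ℝ) ρ) := by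
    intro x hx
    exact ((hg' x (habsρ x hx)).continuousAt).continuousWithinAt
  have hlhs_int : IntervalIntegrable (fun s => s * gI s) volume 0 ρ := by
    apply ContinuousOn.intervalIntegrable
    rw [uIcc_of_le hρ.le]
    exact continuousOn_id.mul hgIcont
  have hcont_lin : Continuous (fun s : ℝ => 2*π*(w x₀)*s) :=
    continuous_const.mul continuous_id
  have hcont_cub : Continuous (fun s : ℝ => π*b/2*s^3) :=
    continuous_const.mul (continuous_pow 3)
  have hrhs_int : IntervalIntegrable (fun s => 2*π*(w x₀)*s - π*b/2*s^3) volume 0 ρ :=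
    (hcont_lin.sub hcont_cub).intervalIntegrable _ _
  have hcomp : ∫ s in (0:ℝ)..ρ, (2*π*(w x₀)*s - π*b/2*s^3)
      = π*(w x₀)*ρ^2 - π*b*ρ^4/8 := by
    rw [intervalIntegral.integral_sub (hcont_lin.intervalIntegrable _ _)
      (hcont_cub.intervalIntegrable _ _)]
    have e1 : ∫ s in (0:ℝ)..ρ, 2*π*(w x₀)*s = 2*π*(w x₀)*(ρ^2/2) := by
      rw [show (fun s : ℝ => 2*π*(w x₀)*s) = (fun s : ℝ => 2*π*(w x₀)*s^1) by
        funext s; ring]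
      rw [intervalIntegral.integral_const_mul, integral_pow]
      norm_num
    have e2 : ∫ s in (0:ℝ)..ρ, π*b/2*s^3 = π*b/2*(ρ^4/4) := by
      rw [intervalIntegral.integral_const_mul, integral_pow]
      norm_num
    rw [e1, e2]
    ring
  have hmain : π*(w x₀)*ρ^2 - π*b*ρ^4/8 ≤ ∫ x in Metric.ball x₀ ρ, w x := by
    rw [hpolar]
    have step1 : ∫ s in (0:ℝ)..ρ, ∫ θ in (-π)..π, s * w (x₀ + s • uu θ)
        = ∫ s in (0:ℝ)..ρ, s * gI s := by
      apply intervalIntegral.integral_congr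
      intro s _
      exact hinner s
    rw [step1, ← hcomp]
    apply intervalIntegral.integral_mono_on hρ.le hrhs_int hlhs_int
    intro s hs
    have := hg_lb s hs
    nlinarith [hs.1]
  have hπρ : (0:ℝ) < π * ρ^2 := by positivity
  have hfin := mul_le_mul_of_nonneg_left hmain (inv_nonneg.2 hπρ.le)
  have heq : (π*ρ^2)⁻¹ * (π*(w x₀)*ρ^2 - π*b*ρ^4/8) = w x₀ - b*ρ^2/8 := by
    field_simp
  rw [heq] at hfin
  linarith

/-- The Euclidean Laplacian of a function `e : ℝ² → ℝ`, given by the sum of the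
pure second derivatives in the coordinate directions. -/
noncomputable def euclideanLaplacian (e : EuclideanSpace ℝ (Fin 2) → ℝ)
    (x : EuclideanSpace ℝ (Fin 2)) : ℝ :=
  ∑ i : Fin 2,
    iteratedFDeriv ℝ 2 e x ![EuclideanSpace.single i 1, EuclideanSpace.single i 1]

lemma lap_eq (e : EuclideanSpace ℝ (Fin 2) → ℝ) (x : EuclideanSpace ℝ (Fin 2)) :
    euclideanLaplacian e x
      = fderiv ℝ (fderiv ℝ e) x E1 E1 + fderiv ℝ (fderiv ℝ e) x E2 E2 := by
  rw [euclideanLaplacian, Fin.sum_univ_two, iteratedFDeriv_two_apply, iteratedFDeriv_two_apply]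
  simp [Matrix.cons_val_zero, Matrix.cons_val_one, Matrix.head_cons, E1, E2]

set_option maxHeartbeats 1600000 in
/-- Small-energy mean value estimate (Lemma 4.3.2 of McDuff–Salamon):
if `e` is a positive `C²` function on the open ball `B(0,r) ⊂ ℝ²` with
`-Δe ≤ A e²` and `∫_{B(0,r)} e ≤ π/(12A)`, then `e(0) ≤ (8/(π r²)) ∫_{B(0,r)} e`. -/
theorem small_energy_mean_value_estimate
    (r A : ℝ) (hr : 0 < r) (hA : 0 < A)
    (e : EuclideanSpace ℝ (Fin 2) → ℝ)
    (he : ContDiffOn ℝ 2 e (Metric.ball (0 : EuclideanSpace ℝ (Fin 2)) r))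
    (hpos : ∀ x ∈ Metric.ball (0 : EuclideanSpace ℝ (Fin 2)) r, 0 < e x)
    (hineq : ∀ x ∈ Metric.ball (0 : EuclideanSpace ℝ (Fin 2)) r,
      -(euclideanLaplacian e x) ≤ A * (e x) ^ 2)
    (hint : IntegrableOn e (Metric.ball (0 : EuclideanSpace ℝ (Fin 2)) r))
    (hsmall : ∫ x in Metric.ball (0 : EuclideanSpace ℝ (Fin 2)) r, e x ≤ π / (12 * A)) :
    e 0 ≤ (8 / (π * r ^ 2)) * ∫ x in Metric.ball (0 : EuclideanSpace ℝ (Fin 2)) r, e x := by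
  have hπ := Real.pi_pos
  set I : ℝ := ∫ x in Metric.ball (0 : EE) r, e x with hIdef
  have hI0 : 0 ≤ I :=
    setIntegral_nonneg measurableSet_ball (fun x hx => (hpos x hx).le)
  have hΔ' : ∀ x ∈ Metric.ball (0 : EE) r,
      -(A * (e x)^2) ≤ fderiv ℝ (fderiv ℝ e) x E1 E1 + fderiv ℝ (fderiv ℝ e) x E2 E2 := by
    intro x hx
    have h1 := hineq x hx
    rw [lap_eq] at h1
    linarith
  -- the main claim, for every smaller radius
  have claim : ∀ r' : ℝ, 0 < r' → r' < r → e 0 ≤ 8 / (π * r'^2) * I := by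
    intro r' hr'0 hr'r
    have hKsub : Metric.closedBall (0:EE) r' ⊆ Metric.ball (0:EE) r := by
      intro y hy
      rw [Metric.mem_closedBall] at hy
      rw [Metric.mem_ball]
      linarith
    -- maximize (r' - ‖x‖)² e x over the closed ball
    have hcont : ContinuousOn (fun x : EE => (r' - ‖x‖)^2 * e x) (Metric.closedBall 0 r') := by
      apply ContinuousOn.mul
      · exact ((continuous_const.sub continuous_norm).pow 2).continuousOn
      · exact he.continuousOn.mono hKsub
    obtain ⟨xs, hxsK, hmax⟩ := (isCompact_closedBall (0:EE) r').exists_isMaxOn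
      ⟨0, by simp [hr'0.le]⟩ hcont
    rw [Metric.mem_closedBall, dist_zero_right] at hxsK
    have hxsball : xs ∈ Metric.ball (0:EE) r := by
      rw [Metric.mem_ball, dist_zero_right]; linarith
    set c : ℝ := e xs with hcdef
    have hc : 0 < c := hpos xs hxsball
    have hmax' : ∀ y ∈ Metric.closedBall (0:EE) r', (r' - ‖y‖)^2 * e y ≤ (r' - ‖xs‖)^2 * c :=
      fun y hy => hmax hy
    have h0K : (0:EE) ∈ Metric.closedBall (0:EE) r' := by simp [hr'0.le]
    have hF0 : (0:ℝ) < r'^2 * e 0 := by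
      have := hpos 0 (by rw [Metric.mem_ball]; simpa using hr)
      positivity
    have hF0le : r'^2 * e 0 ≤ (r' - ‖xs‖)^2 * c := by
      have := hmax' 0 h0K
      simpa using this
    have hd : 0 < r' - ‖xs‖ := by
      rcases lt_or_eq_of_le hxsK with h | h
      · linarith
      · exfalso
        rw [h] at hF0le
        simp at hF0le
        nlinarith
    set δ : ℝ := (r' - ‖xs‖) / 2 with hδdef
    have hδ : 0 < δ := by positivity
    have hkey : ∀ y : EE, dist y xs ≤ (3/2) * δ → y ∈ Metric.ball (0:EE) r := by
      intro y hy
      rw [Metric.mem_ball]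
      calc dist y 0 ≤ dist y xs + dist xs 0 := dist_triangle _ _ _
      _ ≤ (3/2) * δ + ‖xs‖ := by rw [dist_zero_right]; linarith
      _ < r := by
        rw [hδdef]
        linarith
    have hkey2 : ∀ y : EE, dist y xs ≤ δ → e y ≤ 4 * c := by
      intro y hy
      have hyK : y ∈ Metric.closedBall (0:EE) r' := by
        rw [Metric.mem_closedBall, dist_zero_right]
        calc ‖y‖ = ‖y - xs + xs‖ := by rw [sub_add_cancel]
        _ ≤ ‖y - xs‖ + ‖xs‖ := norm_add_le _ _
        _ ≤ δ + ‖xs‖ := by rw [← dist_eq_norm]; exact add_le_add_left hy _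
        _ ≤ r' := by rw [hδdef]; linarith
      have hyball : y ∈ Metric.ball (0:EE) r := hkey y (by linarith)
      have hsep : δ ≤ r' - ‖y‖ := by
        rw [Metric.mem_closedBall, dist_zero_right] at hyK
        have : ‖y‖ ≤ δ + ‖xs‖ := by
          calc ‖y‖ = ‖y - xs + xs‖ := by rw [sub_add_cancel]
          _ ≤ ‖y - xs‖ + ‖xs‖ := norm_add_le _ _
          _ ≤ δ + ‖xs‖ := by rw [← dist_eq_norm]; exact add_le_add_left hy _
        rw [hδdef] at this ⊢
        linarith
      have h1 := hmax' y hyK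
      have h2 : (r' - ‖xs‖)^2 * c = 4 * δ^2 * c := by rw [hδdef]; ring
      have hey := (hpos y hyball).le
      have hsq : δ^2 ≤ (r' - ‖y‖)^2 := by nlinarith
      have h4 : δ^2 * e y ≤ 4*δ^2*c := by nlinarith [mul_le_mul_of_nonneg_right hsq hey]
      have h5 := (mul_le_mul_iff_right₀ (show (0:ℝ) < δ^2 by positivity)).mp
        (show δ^2 * e y ≤ δ^2 * (4*c) by linarith)
      exact h5
    -- bound on the Laplacian
    have hΔbound : ∀ x ∈ Metric.ball xs δ,
        -(16*A*c^2) ≤ fderiv ℝ (fderiv ℝ e) x E1 E1 + fderiv ℝ (fderiv ℝ e) x E2 E2 := by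
      intro x hx
      rw [Metric.mem_ball] at hx
      have hxball : x ∈ Metric.ball (0:EE) r := hkey x (by linarith)
      have h1 := hΔ' x hxball
      have h2 := hkey2 x hx.le
      have h3 := (hpos x hxball).le
      have h4 : e x ^ 2 ≤ 16 * c^2 := by nlinarith
      have h5 : A * e x ^ 2 ≤ A * (16*c^2) := mul_le_mul_of_nonneg_left h4 hA.le
      linarith
    -- comparison of integrals
    have hIcomp : ∀ s : ℝ, 0 < s → s ≤ δ → ∫ x in Metric.ball xs s, e x ≤ I := by
      intro s hs0 hsδ
      rw [hIdef]
      apply setIntegral_mono_set hint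
      · exact (ae_restrict_iff' measurableSet_ball).2 (ae_of_all _ fun x hx => (hpos x hx).le)
      · apply HasSubset.Subset.eventuallyLE
        intro y hy
        rw [Metric.mem_ball] at hy
        exact hkey y (by linarith)
    by_cases hcase : 4*A*c*δ^2 ≤ 1
    · -- small case : use radius δ
      have hmvi := mvi e Metric.isOpen_ball he xs δ ((3/2)*δ) (16*A*c^2) hδ
        (by linarith)
        (fun y hy => hkey y (by rwa [Metric.mem_closedBall] at hy))
        hΔbound
      have hJ := hIcomp δ hδ (le_refl _)
      have hπδ : (0:ℝ) < π * δ^2 := by positivity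
      have hc2 : c ≤ 16*A*c^2*δ^2/8 + (π*δ^2)⁻¹ * I := by
        calc c ≤ 16*A*c^2*δ^2/8 + (π*δ^2)⁻¹ * ∫ x in Metric.ball xs δ, e x := hmvi
        _ ≤ 16*A*c^2*δ^2/8 + (π*δ^2)⁻¹ * I := by
            have := mul_le_mul_of_nonneg_left hJ (inv_nonneg.2 hπδ.le)
            linarith
      have hsmallterm : 16*A*c^2*δ^2/8 ≤ c/2 := by nlinarith
      have hc3 : c/2 ≤ (π*δ^2)⁻¹ * I := by linarith
      have hc4 : π*δ^2*(c/2) ≤ I := by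
        have h3 := mul_le_mul_of_nonneg_left hc3 (le_of_lt hπδ)
        rwa [← mul_assoc, mul_inv_cancel₀ (ne_of_gt hπδ), one_mul] at h3
      rw [div_mul_eq_mul_div, le_div_iff₀ (show (0:ℝ) < π * r'^2 by positivity)]
      have h5 : π * (r'^2 * e 0) ≤ π * (4*δ^2*c) := by
        apply mul_le_mul_of_nonneg_left _ hπ.le
        calc r'^2 * e 0 ≤ (r' - ‖xs‖)^2 * c := hF0le
        _ = 4*δ^2*c := by rw [hδdef]; ring
      nlinarith
    · -- large case : contradiction with the smallness assumption
      exfalso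
      push_neg at hcase
      set s : ℝ := 1 / (2*Real.sqrt (A*c)) with hsdef
      have hAc : 0 < A*c := by positivity
      have hsqrt : 0 < Real.sqrt (A*c) := Real.sqrt_pos.2 hAc
      have hs0 : 0 < s := by positivity
      have hs2 : s^2 = 1/(4*(A*c)) := by
        rw [hsdef]
        rw [div_pow, mul_pow, Real.sq_sqrt hAc.le]
        norm_num
      have hsδ : s < δ := by
        have h1 : s^2 < δ^2 := by
          rw [hs2]
          rw [div_lt_iff₀ (by positivity)]
          nlinarith
        nlinarith
      have hmvi := mvi e Metric.isOpen_ball he xs s δ (16*A*c^2) hs0 hsδ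
        (fun y hy => hkey y (by rw [Metric.mem_closedBall] at hy; linarith))
        (fun x hx => hΔbound x (by rw [Metric.mem_ball] at hx ⊢; linarith))
      have hJ := hIcomp s hs0 hsδ.le
      have hπs : (0:ℝ) < π * s^2 := by positivity
      have hc2 : c ≤ 16*A*c^2*s^2/8 + (π*s^2)⁻¹ * I := by
        calc c ≤ 16*A*c^2*s^2/8 + (π*s^2)⁻¹ * ∫ x in Metric.ball xs s, e x := hmvi
        _ ≤ 16*A*c^2*s^2/8 + (π*s^2)⁻¹ * I := by
            have := mul_le_mul_of_nonneg_left hJ (inv_nonneg.2 hπs.le)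
            linarith
      have hterm1 : 16*A*c^2*s^2/8 = c/2 := by
        rw [hs2]; field_simp; ring
      have hterm2 : (π*s^2)⁻¹ = 4*A*c/π := by
        rw [hs2]; field_simp
      rw [hterm1, hterm2] at hc2
      -- c/2 ≤ (4Ac/π) I  ⇒  π/(8A) ≤ I
      have hI_lb : π/(8*A) ≤ I := by
        have h1 : c/2 ≤ 4*A*c/π * I := by linarith
        rw [div_le_iff₀ (by positivity : (0:ℝ) < 8*A)]
        have h2 : π * (c/2) ≤ π * (4*A*c/π * I) := mul_le_mul_of_nonneg_left h1 hπ.le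
        have h3 : π * (4*A*c/π * I) = 4*A*c*I := by field_simp
        rw [h3] at h2
        nlinarith
      have hI_ub : I ≤ π/(12*A) := hsmall
      have hcontra : π/(8*A) ≤ π/(12*A) := le_trans hI_lb hI_ub
      rw [div_le_div_iff₀ (by positivity) (by positivity)] at hcontra
      nlinarith
  -- pass to the limit r' → r
  have htendsto : Filter.Tendsto (fun x : ℝ => 8/(π*x^2) * I) (nhdsWithin r (Set.Iio r))
      (nhds (8/(π*r^2) * I)) := by
    apply Filter.Tendsto.mono_left _ nhdsWithin_le_nhds
    apply ContinuousAt.tendsto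
    apply ContinuousAt.mul _ continuousAt_const
    apply ContinuousAt.div continuousAt_const
    · fun_prop
    · positivity
  apply ge_of_tendsto htendsto
  filter_upwards [Ioo_mem_nhdsLT_of_mem (Set.mem_Ioc.2 ⟨hr, le_refl r⟩)] with x hx
  exact claim x hx.1 hx.2
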